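/- For any function class F ⊆ (X → {1,-1}), the threshold dimension over all base functions satisfies Tdim(F) ≤ 2·Tdim_1(F), where Tdim_1 is the threshold dimension with respect to the constant function 1 and Tdim(F) = sup over f* ∈ F of Tdim_{f*}(F). -/
import Mathlib


/-- `(x, f)` is a threshold witnessing sequence for `F` w.r.t. base function `g`. -/
def ThreshSeq {X : Type*} (F : Set (X → ℤ)) (g : X → ℤ) {m : ℕ}
    (x : Fin m → X) (f : Fin m → X → ℤ) : Prop :=
  (∀ i, f i ∈ F) ∧ ∀ i : Fin m,
    (∀ k : Fin m, i ≤ k → f i (x k) ≠ g (x k)) ∧ ∀ j : Fin m, j < i → f i (x j) = g (x j)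

/-- `Tdim(F) ≤ 2 · Tdim_1(F)`: if `t₁` bounds the length of every threshold witnessing
sequence against the constant-`1` base function, then for every `f* ∈ F`, every
threshold witnessing sequence against `f*` has length at most `2 · t₁`. -/
theorem stmt_14 {X : Type*} (F : Set (X → ℤ))
    (hsign : ∀ f ∈ F, ∀ x, f x = 1 ∨ f x = -1) (t₁ : ℕ)
    (ht₁ : ∀ (m : ℕ) (x : Fin m → X) (f : Fin m → X → ℤ),
      ThreshSeq F (fun _ => 1) x f → m ≤ t₁) :
    ∀ fstar ∈ F, ∀ (m : ℕ) (x : Fin m → X) (f : Fin m → X → ℤ),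
      ThreshSeq F fstar x f → m ≤ 2 * t₁ := by
  classical
  intro fstar hf m x f hx
  obtain ⟨hmemF, hth⟩ := hx
  set s : Finset (Fin m) := Finset.univ.filter (fun i => fstar (x i) = 1) with hs
  set t : Finset (Fin m) := Finset.univ.filter (fun i => ¬ fstar (x i) = 1) with htdef
  have hcard : s.card + t.card = m := by
    rw [hs, htdef]
    simpa [Finset.card_univ] using Finset.card_filter_add_card_filter_not (s := (Finset.univ : Finset (Fin m)))
      (p := fun i : Fin m => fstar (x i) = 1)
  have hsval : ∀ i ∈ s, fstar (x i) = 1 := by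
    intro i hi; simpa [hs] using hi
  have hneg : ∀ i ∈ t, fstar (x i) = -1 := by
    intro i hi
    rcases hsign fstar hf (x i) with h | h
    · exact absurd h (by simpa [htdef] using hi)
    · exact h
  -- positive part
  have hS : s.card ≤ t₁ := by
    let e := s.orderIsoOfFin rfl
    apply ht₁ s.card (fun i => x (e i)) (fun i => f (e i))
    refine ⟨fun i => hmemF _, fun i => ⟨?_, ?_⟩⟩
    · intro k hk
      have h1 : fstar (x (e k)) = 1 := hsval _ (e k).2
      have hle : ((e i : Fin m)) ≤ (e k : Fin m) := by
        exact_mod_cast e.monotone hk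
      have := (hth (e i)).1 (e k) hle
      simpa [h1] using this
    · intro j hj
      have h1 : fstar (x (e j)) = 1 := hsval _ (e j).2
      have hlt : ((e j : Fin m)) < (e i : Fin m) := by
        exact_mod_cast e.strictMono hj
      have := (hth (e i)).2 (e j) hlt
      simpa [h1] using this
  -- negative part
  have hT : t.card ≤ t₁ := by
    let e := t.orderIsoOfFin rfl
    let d : Fin t.card → Fin m := fun p => (e p.rev : Fin m)
    have hd : ∀ p, (d p) ∈ t := fun p => (e p.rev).2
    have hdanti : ∀ {p k : Fin t.card}, p < k → d k < d p := by
      intro p k h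
      have : k.rev < p.rev := by simpa using (Fin.rev_lt_rev).2 h
      exact_mod_cast e.strictMono this
    have hdantile : ∀ {p k : Fin t.card}, p ≤ k → d k ≤ d p := by
      intro p k h
      have : k.rev ≤ p.rev := by simpa using (Fin.rev_le_rev).2 h
      exact_mod_cast e.monotone this
    let f' : Fin t.card → X → ℤ := fun p =>
      if h : (p : ℕ) = 0 then fstar else f (d ⟨(p : ℕ) - 1, lt_of_le_of_lt (Nat.pred_le _) p.2⟩)
    apply ht₁ t.card (fun p => x (d p)) f'
    refine ⟨fun p => ?_, fun p => ⟨?_, ?_⟩⟩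
    · by_cases h : (p : ℕ) = 0 <;> simp [f', h, hf, hmemF]
    · intro k hk
      by_cases h : (p : ℕ) = 0
      · have := hneg _ (hd k)
        simp [f', h, this]
      · set q : Fin t.card := ⟨(p : ℕ) - 1, lt_of_le_of_lt (Nat.pred_le _) p.2⟩ with hq
        have hqk : q < k := lt_of_lt_of_le (by simp [hq, Fin.lt_def]; omega) hk
        have hdlt : d k < d q := hdanti hqk
        have := (hth (d q)).2 (d k) hdlt
        have hneg' := hneg _ (hd k)
        simp only [f', dif_neg h]
        rw [this, hneg']
        norm_num
    · intro j hj
      have h : (p : ℕ) ≠ 0 := by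
        intro h; rw [Fin.lt_def, h] at hj; omega
      set q : Fin t.card := ⟨(p : ℕ) - 1, lt_of_le_of_lt (Nat.pred_le _) p.2⟩ with hq
      have hjq : j ≤ q := by
        rw [Fin.le_def]; rw [Fin.lt_def] at hj; simp [hq]; omega
      have hdle : d q ≤ d j := hdantile hjq
      have hne := (hth (d q)).1 (d j) hdle
      have hneg' := hneg _ (hd j)
      rw [hneg'] at hne
      have hqmem : f (d q) ∈ F := hmemF _
      rcases hsign _ hqmem (x (d j)) with h1 | h1
      · simp only [f', dif_neg h]; exact h1
      · exact absurd h1 hne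
  omega
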